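/- Let f(z_1,...,z_m) = 1 + (z_1+ξ_1)^d + ... + (z_m+ξ_m)^d + (ξ_{m+1} - z_1 - ... - z_m)^d where d ≥ 2 and ξ_1,...,ξ_{m+1} are complex numbers with ξ_j^{d-1} = 1 and 1 + ξ_1 + ... + ξ_{m+1} = 0. Then f(0) = 0, all partial derivatives ∂f/∂z_j vanish at 0, and the Hessian matrix of f at 0 is invertible (so the origin is a nondegenerate critical point of f, hence an ordinary double point of {f = 0}). -/

import Mathlib

open MvPolynomial in
theorem fermat_singularity_nondegenerate (m : ℕ) (hm : 1 ≤ m) (d : ℕ) (hd : 2 ≤ d)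
    (ξ : Fin (m + 1) → ℂ) (hξ : ∀ j, ξ j ^ (d - 1) = 1)
    (hsum : 1 + ∑ j, ξ j = 0)
    (f : MvPolynomial (Fin m) ℂ)
    (hf : f = C 1 + ∑ j : Fin m, (X j + C (ξ j.castSucc)) ^ d +
        (C (ξ (Fin.last m)) - ∑ j : Fin m, X j) ^ d) :
    eval (0 : Fin m → ℂ) f = 0 ∧
    (∀ j : Fin m, eval (0 : Fin m → ℂ) (pderiv j f) = 0) ∧
    IsUnit (Matrix.det (Matrix.of fun i j : Fin m =>
      eval (0 : Fin m → ℂ) (pderiv i (pderiv j f)))) := by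
  subst hf
  have h1 : d - 1 - 1 = d - 2 := by omega
  have h2 : ((d-1 : ℕ) : ℂ) = (d:ℂ) - 1 := by push_cast [Nat.cast_sub (by omega : 1 ≤ d)]; ring
  have hpow : ∀ j, ξ j ^ d = ξ j := by
    intro j
    conv_lhs => rw [show d = (d-1)+1 by omega]
    rw [pow_succ, hξ, one_mul]
  have hne : ∀ j, ξ j ≠ 0 := by
    intro j h
    have := hξ j
    rw [h, zero_pow (by omega)] at this
    exact zero_ne_one this
  have hxa : ∀ j, ξ j ^ (d-2) * ξ j = 1 := by
    intro j
    rw [← pow_succ, show d - 2 + 1 = d - 1 by omega, hξ]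
  have hxne : ∀ j, ξ j ^ (d-2) ≠ 0 := fun j => pow_ne_zero _ (hne j)
  refine ⟨?_, ?_, ?_⟩
  · simp [hpow]
    rw [Fin.sum_univ_castSucc] at hsum
    linear_combination hsum
  · intro i
    simp [pderiv_pow, Pi.single_apply, mul_ite, Finset.sum_ite_eq', hξ, sub_eq_add_neg]
  · have hent : ∀ i k : Fin m,
        eval (0 : Fin m → ℂ) (pderiv i (pderiv k ((C 1 : MvPolynomial (Fin m) ℂ) +
          ∑ j : Fin m, (X j + C (ξ j.castSucc)) ^ d +
          (C (ξ (Fin.last m)) - ∑ j : Fin m, X j) ^ d))) =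
        (d : ℂ) * ((d:ℂ) - 1) * ((if i = k then (ξ i.castSucc)^(d-2) else 0) + (ξ (Fin.last m))^(d-2)) := by
      intro i k
      simp [pderiv_pow, Pi.single_apply, mul_ite, ite_mul, Finset.sum_ite_eq', h1, Finset.mul_sum,
        sub_eq_add_neg, map_pow, map_add, map_mul, constantCoeff_X, constantCoeff_C, h2]
      rcases eq_or_ne i k with rfl | hik
      · simp; rw [h2]; ring
      · simp [hik, Ne.symm hik]; ring
    set y : ℂ := (ξ (Fin.last m))^(d-2) with hy
    have hH : (Matrix.of fun i j : Fin m =>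
        eval (0 : Fin m → ℂ) (pderiv i (pderiv j ((C 1 : MvPolynomial (Fin m) ℂ) +
          ∑ j : Fin m, (X j + C (ξ j.castSucc)) ^ d +
          (C (ξ (Fin.last m)) - ∑ j : Fin m, X j) ^ d)))) =
        ((d : ℂ) * ((d:ℂ) - 1)) •
          (Matrix.diagonal (fun i : Fin m => (ξ i.castSucc)^(d-2)) +
            Matrix.replicateCol Unit (fun _ : Fin m => y) * Matrix.replicateRow Unit (fun _ : Fin m => (1:ℂ))) := by
      ext i k
      rw [Matrix.of_apply, hent i k, Matrix.smul_apply, Matrix.add_apply, Matrix.mul_apply]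
      simp [Matrix.diagonal_apply]
    rw [hH, Matrix.det_smul]
    have hA : IsUnit (Matrix.diagonal (fun i : Fin m => (ξ i.castSucc)^(d-2))).det := by
      rw [Matrix.det_diagonal, isUnit_iff_ne_zero]
      exact Finset.prod_ne_zero_iff.2 fun i _ => hxne _
    rw [Matrix.det_add_replicateCol_mul_replicateRow hA]
    have hinv : ∀ j : Fin m, (ξ j.castSucc ^ (d-2))⁻¹ = ξ j.castSucc :=
      fun j => inv_eq_of_mul_eq_one_right (hxa j.castSucc)
    have hsum' : ∑ j : Fin m, ξ j.castSucc = -1 - ξ (Fin.last m) := by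
      rw [Fin.sum_univ_castSucc] at hsum
      linear_combination hsum
    have hdiaginv : (Matrix.diagonal (fun i : Fin m => (ξ i.castSucc)^(d-2)))⁻¹ =
        Matrix.diagonal (fun i : Fin m => ξ i.castSucc) := by
      apply Matrix.inv_eq_right_inv
      rw [Matrix.diagonal_mul_diagonal]
      rw [show (fun i : Fin m => ξ i.castSucc ^ (d-2) * ξ i.castSucc) = fun _ => (1:ℂ)
        from funext fun i => hxa i.castSucc]
      exact Matrix.diagonal_one
    have hdet1 : (1 + Matrix.replicateRow Unit (fun _ : Fin m => (1:ℂ)) *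
        (Matrix.diagonal (fun i : Fin m => (ξ i.castSucc)^(d-2)))⁻¹ *
        Matrix.replicateCol Unit (fun _ : Fin m => y)).det = -y := by
      rw [hdiaginv, Matrix.det_unique]
      simp [Matrix.mul_apply, Matrix.diagonal_apply]
      rw [← Finset.sum_mul, hsum']
      have : ξ (Fin.last m) * y = 1 := by
        rw [hy, mul_comm]; exact hxa _
      linear_combination -this
    rw [hdet1]
    have hc : (d : ℂ) * ((d:ℂ) - 1) ≠ 0 := by
      have hd0 : (d:ℂ) ≠ 0 := Nat.cast_ne_zero.2 (by omega)
      have hd1 : (d:ℂ) - 1 ≠ 0 := by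
        intro h
        have h' : (d:ℂ) = ((1:ℕ):ℂ) := by push_cast; linear_combination h
        have : d = 1 := by exact_mod_cast h'
        omega
      exact mul_ne_zero hd0 hd1
    rw [isUnit_iff_ne_zero]
    refine mul_ne_zero (pow_ne_zero _ hc) (mul_ne_zero ?_ (neg_ne_zero.2 (hxne _)))
    rw [Matrix.det_diagonal]
    exact Finset.prod_ne_zero_iff.2 fun i _ => hxne _
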